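/- Let G be a connected graph, k ≥ 1 and s ∈ [k]. Two (k,s)-tuples t and u of G receive the same (k,s)-LWL color after i iterations if and only if the depth-i unrolled trees of the (k,s)-tuple graph rooted at t and u, respectively, are isomorphic via a label-preserving isomorphism mapping the root of one to the root of the other. -/

import Mathlib

open SimpleGraph Function
open scoped Classical

noncomputable section

variable {V : Type*} [Fintype V]

/-- A `k`-tuple is a `(k,s)`-tuple if it induces a subgraph with at most `s`
connected components. -/
def IsKS (G : SimpleGraph V) (k s : ℕ) (v : Fin k → V) : Prop :=
  Nat.card (G.induce (Set.range v)).ConnectedComponent ≤ s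

/-- The atomic (isomorphism) type of a `k`-tuple: which entries coincide and which are
adjacent. -/
def atp (G : SimpleGraph V) (k : ℕ) (v : Fin k → V) : Fin k → Fin k → Prop × Prop :=
  fun i j => (v i = v j, G.Adj (v i) (v j))

/-- Colors of the `(k,s)`-LWL after `i` rounds. -/
def LWLColor (k : ℕ) : ℕ → Type _
  | 0 => Fin k → Fin k → Prop × Prop
  | i + 1 => LWLColor k i × (Fin k → Multiset (LWLColor k i))

/-- The `(k,s)`-LWL coloring after `i` rounds: refine by the multisets of colors of the
local `j`-neighbors which are themselves `(k,s)`-tuples. -/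
def lwl (G : SimpleGraph V) (k s : ℕ) : (i : ℕ) → (Fin k → V) → LWLColor k i
  | 0, v => atp G k v
  | i + 1, v =>
    (lwl G k s i v, fun j =>
      ((Finset.univ.filter fun x : V =>
          G.Adj (v j) x ∧ IsKS G k s (Function.update v j x)).val.map
        fun x => lwl G k s i (Function.update v j x)))

/-- Finite rooted directed trees with node labels in `L` and edge labels in `E`. -/
inductive LTree (L E : Type u) : Type u
  | node : L → List (E × LTree L E) → LTree L E

/-- Isomorphism of rooted, labeled directed trees mapping root to root: roots carry
equal labels and the children correspond under a bijection preserving edge labels and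
(recursively) isomorphism of the subtrees. -/
inductive LTree.Iso {L E : Type u} : LTree L E → LTree L E → Prop
  | node (l : L) (cs ds : List (E × LTree L E)) (σ : Fin cs.length ≃ Fin ds.length)
      (hlab : ∀ i : Fin cs.length, (cs.get i).1 = (ds.get (σ i)).1)
      (hiso : ∀ i : Fin cs.length, LTree.Iso (cs.get i).2 (ds.get (σ i)).2) :
      LTree.Iso (.node l cs) (.node l ds)

/-- The unrolled tree of depth `i` of the `(k,s)`-tuple graph around the node
corresponding to the tuple `v`: node labels are atomic types of tuples, edge labels
record the coordinate `j` for which the child is a local `j`-neighbor (restricted to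
`(k,s)`-tuples). -/
def unroll (G : SimpleGraph V) (k s : ℕ) :
    (i : ℕ) → (Fin k → V) → LTree (Fin k → Fin k → Prop × Prop) (Fin k)
  | 0, v => .node (atp G k v) []
  | i + 1, v => .node (atp G k v)
      (((Finset.univ.filter fun p : Fin k × V =>
            G.Adj (v p.1) p.2 ∧ IsKS G k s (Function.update v p.1 p.2)).toList).map
        fun p => (p.1, unroll G k s i (Function.update v p.1 p.2)))

/-! ### Auxiliary lemmas -/

/-- A permutation of lists yields an index equivalence matching entries. -/
theorem List.Perm.exists_get_equiv {α : Type*} {l₁ l₂ : List α} (h : l₁.Perm l₂) :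
    ∃ σ : Fin l₁.length ≃ Fin l₂.length, ∀ i, l₁.get i = l₂.get (σ i) := by
  induction h with
  | nil => exact ⟨Equiv.refl _, fun i => i.elim0⟩
  | cons x h ih =>
    obtain ⟨σ, hσ⟩ := ih
    simp only [List.get_eq_getElem] at hσ
    refine ⟨(finSuccEquiv _).trans ((Equiv.optionCongr σ).trans (finSuccEquiv _).symm), ?_⟩
    intro i
    refine Fin.cases ?_ (fun j => ?_) i <;> simp [hσ]
  | swap x y l =>
    refine ⟨Equiv.swap ⟨0, by simp⟩ ⟨1, by simp⟩, fun i => ?_⟩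
    rcases i with ⟨(_|_|n), hn⟩ <;>
      simp [Equiv.swap_apply_def, Fin.ext_iff, List.get]
  | trans h₁ h₂ ih₁ ih₂ =>
    obtain ⟨σ, hσ⟩ := ih₁; obtain ⟨τ, hτ⟩ := ih₂
    exact ⟨σ.trans τ, fun i => (hσ i).trans (hτ _)⟩

/-- Equality (as multisets) of mapped lists is equivalent to an index equivalence
matching values. -/
theorem map_coe_eq_iff {α β γ : Type*} (l₁ : List α) (l₂ : List β) (f : α → γ) (g : β → γ) :
    (↑(l₁.map f) : Multiset γ) = ↑(l₂.map g) ↔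
      ∃ σ : Fin l₁.length ≃ Fin l₂.length, ∀ i, f (l₁.get i) = g (l₂.get (σ i)) := by
  constructor
  · intro h
    obtain ⟨σ, hσ⟩ := (Multiset.coe_eq_coe.mp h).exists_get_equiv
    refine ⟨(finCongr (l₁.length_map f)).symm.trans (σ.trans (finCongr (l₂.length_map g))), ?_⟩
    intro i
    have := hσ ((finCongr (l₁.length_map f)).symm i)
    simpa using this
  · rintro ⟨σ, hσ⟩
    have h₁ : l₁.map f = List.ofFn (f ∘ l₁.get) := by
      rw [← List.map_ofFn, List.ofFn_get]
    have h₂ : l₂.map g = List.ofFn (g ∘ l₂.get) := by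
      rw [← List.map_ofFn, List.ofFn_get]
    rw [h₁, h₂]
    have e1 : (↑(List.ofFn (f ∘ l₁.get)) : Multiset γ)
        = Multiset.map (f ∘ l₁.get) (Finset.univ.val) := by
      rw [List.ofFn_eq_map, Fin.univ_def]; rfl
    have e2 : (↑(List.ofFn (g ∘ l₂.get)) : Multiset γ)
        = Multiset.map (g ∘ l₂.get) (Finset.univ.val) := by
      rw [List.ofFn_eq_map, Fin.univ_def]; rfl
    rw [e1, e2]
    have : (f ∘ l₁.get) = (g ∘ l₂.get) ∘ σ := by
      funext i; exact hσ i
    rw [this, ← Multiset.map_map, Multiset.map_univ_val_equiv]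

/-- Splitting a multiset of labeled values over a product into its fibers. -/
theorem pair_map_eq_iff {k : ℕ} {W C : Type*} [Fintype W]
    (P R : Fin k × W → Prop) [DecidablePred P] [DecidablePred R] (f h : Fin k × W → C) :
    Multiset.map (fun p => (p.1, f p)) (Finset.univ.filter P).val
        = Multiset.map (fun p => (p.1, h p)) (Finset.univ.filter R).val
      ↔ ∀ j : Fin k,
        Multiset.map (fun x => f (j, x)) (Finset.univ.filter fun x => P (j, x)).val
          = Multiset.map (fun x => h (j, x)) (Finset.univ.filter fun x => R (j, x)).val := by
  have key : ∀ (P : Fin k × W → Prop) [DecidablePred P] (f : Fin k × W → C) (j : Fin k) (c : C),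
      Multiset.count (j, c) (Multiset.map (fun p => (p.1, f p)) (Finset.univ.filter P).val)
        = Multiset.count c
            (Multiset.map (fun x => f (j, x)) (Finset.univ.filter fun x => P (j, x)).val) := by
    intro P _ f j c
    rw [Multiset.count_map, Multiset.count_map, ← Finset.filter_val, ← Finset.filter_val,
      ← Finset.card_def, ← Finset.card_def]
    refine (Finset.card_bij (fun x _ => (j, x)) ?_ ?_ ?_).symm
    · intro x hx
      simp only [Finset.mem_filter, Finset.mem_univ, true_and] at hx ⊢
      exact ⟨hx.1, by simpa using hx.2⟩
    · intro a _ b _ hab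
      simpa using congrArg Prod.snd hab
    · intro p hp
      simp only [Finset.mem_filter, Finset.mem_univ, true_and] at hp
      obtain ⟨hP, hc⟩ := hp
      have hj : j = p.1 := congrArg Prod.fst hc
      have hcv : c = f p := congrArg Prod.snd hc
      refine ⟨p.2, ?_, ?_⟩
      · simp only [Finset.mem_filter, Finset.mem_univ, true_and]
        have hp2 : (j, p.2) = p := by rw [hj]
        rw [hp2]
        exact ⟨hP, hcv⟩
      · show (j, p.2) = p
        rw [hj]
  constructor
  · intro H j
    refine Multiset.ext.mpr fun c => ?_
    rw [← key P f j c, ← key R h j c, H]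
  · intro H
    refine Multiset.ext.mpr fun q => ?_
    obtain ⟨j, c⟩ := q
    rw [key P f j c, key R h j c, H j]

/-- Build a tree isomorphism of nodes with mapped children lists from an index
equivalence. -/
theorem map_iso_node {L E : Type u} {α β : Type*} (l : L) (l₁ : List α) (l₂ : List β)
    (e₁ : α → E) (e₂ : β → E) (f₁ : α → LTree L E) (f₂ : β → LTree L E)
    (σ : Fin l₁.length ≃ Fin l₂.length)
    (hlab : ∀ i, e₁ (l₁.get i) = e₂ (l₂.get (σ i)))
    (hiso : ∀ i, LTree.Iso (f₁ (l₁.get i)) (f₂ (l₂.get (σ i)))) :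
    LTree.Iso (.node l (l₁.map fun a => (e₁ a, f₁ a)))
      (.node l (l₂.map fun b => (e₂ b, f₂ b))) := by
  refine LTree.Iso.node l _ _
    ((finCongr (l₁.length_map _)).trans (σ.trans (finCongr (l₂.length_map _)).symm))
    (fun i => ?_) (fun i => ?_)
  · have := hlab (Fin.cast (l₁.length_map _) i)
    simp only [List.get_eq_getElem, List.getElem_map, Equiv.trans_apply, finCongr_apply,
      Equiv.symm_apply_apply, Fin.coe_cast] at this ⊢
    simpa using this
  · have := hiso (Fin.cast (l₁.length_map _) i)
    simp only [List.get_eq_getElem, List.getElem_map, Equiv.trans_apply, finCongr_apply,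
      Equiv.symm_apply_apply, Fin.coe_cast] at this ⊢
    simpa using this

/-- Destruct a tree isomorphism of nodes with mapped children lists. -/
theorem iso_node_map {L E : Type u} {α β : Type*} {l l' : L} {l₁ : List α} {l₂ : List β}
    {e₁ : α → E} {e₂ : β → E} {f₁ : α → LTree L E} {f₂ : β → LTree L E}
    (h : LTree.Iso (.node l (l₁.map fun a => (e₁ a, f₁ a)))
      (.node l' (l₂.map fun b => (e₂ b, f₂ b)))) :
    l = l' ∧ ∃ σ : Fin l₁.length ≃ Fin l₂.length,
      (∀ i, e₁ (l₁.get i) = e₂ (l₂.get (σ i)))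
        ∧ ∀ i, LTree.Iso (f₁ (l₁.get i)) (f₂ (l₂.get (σ i))) := by
  cases h with
  | node lab cs ds σ hlab hiso =>
    refine ⟨rfl, (finCongr (l₁.length_map _)).symm.trans
      (σ.trans (finCongr (l₂.length_map _))), fun i => ?_, fun i => ?_⟩
    · have := hlab ((finCongr (l₁.length_map _)).symm i)
      simp only [List.get_eq_getElem, List.getElem_map, Fin.coe_cast] at this ⊢
      simpa using this
    · have := hiso ((finCongr (l₁.length_map _)).symm i)
      simp only [List.get_eq_getElem, List.getElem_map, Fin.coe_cast] at this ⊢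
      simpa using this

/-- Inversion for isomorphisms of leaf nodes. -/
theorem iso_nil_inv {L E : Type u} {a b : L}
    (h : LTree.Iso (LTree.node a ([] : List (E × LTree L E))) (.node b [])) : a = b := by
  cases h; rfl

/-- One-step unfolding of `unroll`. -/
theorem unroll_succ (G : SimpleGraph V) (k s i : ℕ) (v : Fin k → V) :
    unroll G k s (i + 1) v = .node (atp G k v)
      (((Finset.univ.filter fun p : Fin k × V =>
            G.Adj (v p.1) p.2 ∧ IsKS G k s (Function.update v p.1 p.2)).toList).map
        fun p => (p.1, unroll G k s i (Function.update v p.1 p.2))) := rfl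

/-- One-step unfolding of `lwl`. -/
theorem lwl_succ (G : SimpleGraph V) (k s i : ℕ) (v : Fin k → V) :
    lwl G k s (i + 1) v = (lwl G k s i v, fun j =>
      ((Finset.univ.filter fun x : V =>
          G.Adj (v j) x ∧ IsKS G k s (Function.update v j x)).val.map
        fun x => lwl G k s i (Function.update v j x))) := rfl

/-- The underlying multiset of a finset is the coercion of its list. -/
theorem coe_val {α : Type*} (s : Finset α) : s.val = ↑s.toList :=
  (Multiset.coe_toList _).symm

/-- The atomic type is determined by the `lwl` color. -/
theorem atp_of_lwl (G : SimpleGraph V) (k s i : ℕ) {v w : Fin k → V}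
    (h : lwl G k s i v = lwl G k s i w) : atp G k v = atp G k w := by
  induction i with
  | zero => exact h
  | succ i ih =>
    simp only [lwl] at h
    exact ih (congrArg Prod.fst h)

/-- Truncation: isomorphism of depth-`(i+1)` unrolled trees gives isomorphism of
depth-`i` unrolled trees. -/
theorem unroll_trunc (G : SimpleGraph V) (k s : ℕ) :
    ∀ (i : ℕ) (v w : Fin k → V),
      LTree.Iso (unroll G k s (i + 1) v) (unroll G k s (i + 1) w) →
        LTree.Iso (unroll G k s i v) (unroll G k s i w) := by
  intro i
  induction i with
  | zero =>
    intro v w h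
    rw [unroll_succ] at h
    rw [unroll_succ G k s 0 w] at h
    obtain ⟨hatp, -⟩ := iso_node_map (e₁ := Prod.fst) (e₂ := Prod.fst)
      (f₁ := fun p : Fin k × V => unroll G k s 0 (Function.update v p.1 p.2))
      (f₂ := fun p : Fin k × V => unroll G k s 0 (Function.update w p.1 p.2)) h
    simp only [unroll]
    rw [hatp]
    exact LTree.Iso.node _ [] [] (Equiv.refl _) (fun i => i.elim0) (fun i => i.elim0)
  | succ i ih =>
    intro v w h
    rw [unroll_succ G k s (i + 1) v, unroll_succ G k s (i + 1) w] at h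
    obtain ⟨hatp, σ, hlab, hiso⟩ := iso_node_map (e₁ := Prod.fst) (e₂ := Prod.fst)
      (f₁ := fun p : Fin k × V => unroll G k s (i + 1) (Function.update v p.1 p.2))
      (f₂ := fun p : Fin k × V => unroll G k s (i + 1) (Function.update w p.1 p.2)) h
    rw [unroll_succ G k s i v, unroll_succ G k s i w, hatp]
    exact map_iso_node _ _ _ _ _
      (fun p : Fin k × V => unroll G k s i (Function.update v p.1 p.2))
      (fun p : Fin k × V => unroll G k s i (Function.update w p.1 p.2)) σ hlab
      (fun i' => ih _ _ (hiso i'))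

/-- Let `G` be a connected graph, `k ≥ 1` and `s ∈ [k]`. Two
`(k,s)`-tuples `t` and `u` get the same `(k,s)`-LWL color after `i` rounds if and only
if the depth-`i` unrolled trees of the `(k,s)`-tuple graph rooted at `t` and at `u` are
isomorphic via a label-preserving isomorphism matching the roots. -/
theorem lwl_iff_unrolledTree_iso (G : SimpleGraph V) (hG : G.Connected) (k s : ℕ)
    (hk : 1 ≤ k) (hs1 : 1 ≤ s) (hsk : s ≤ k)
    (i : ℕ) (t u : Fin k → V) (ht : IsKS G k s t) (hu : IsKS G k s u) :
    lwl G k s i t = lwl G k s i u ↔ LTree.Iso (unroll G k s i t) (unroll G k s i u) := by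
  clear ht hu
  induction i generalizing t u with
  | zero =>
    constructor
    · intro h
      have hatp : atp G k t = atp G k u := h
      simp only [unroll]
      rw [hatp]
      exact LTree.Iso.node _ [] [] (Equiv.refl _) (fun i => i.elim0) (fun i => i.elim0)
    · intro h
      rw [show unroll G k s 0 t = .node (atp G k t) [] from rfl,
        show unroll G k s 0 u = .node (atp G k u) [] from rfl] at h
      exact iso_nil_inv h
  | succ i ih =>
    constructor
    · intro h
      rw [lwl_succ, lwl_succ] at h
      have h1 : lwl G k s i t = lwl G k s i u := congrArg Prod.fst h
      have h2 := congrArg Prod.snd h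
      have h2' := (pair_map_eq_iff
        (fun p : Fin k × V => G.Adj (t p.1) p.2 ∧ IsKS G k s (Function.update t p.1 p.2))
        (fun p : Fin k × V => G.Adj (u p.1) p.2 ∧ IsKS G k s (Function.update u p.1 p.2))
        (fun p => lwl G k s i (Function.update t p.1 p.2))
        (fun p => lwl G k s i (Function.update u p.1 p.2))).mpr (fun j => congrFun h2 j)
      rw [coe_val, coe_val, Multiset.map_coe, Multiset.map_coe] at h2'
      obtain ⟨σ, hσ⟩ := (map_coe_eq_iff _ _ _ _).mp h2'
      rw [unroll_succ G k s i t, unroll_succ G k s i u, atp_of_lwl G k s i h1]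
      exact map_iso_node _ _ _ Prod.fst Prod.fst
        (fun p : Fin k × V => unroll G k s i (Function.update t p.1 p.2))
        (fun p : Fin k × V => unroll G k s i (Function.update u p.1 p.2)) σ
        (fun i' => (Prod.ext_iff.mp (hσ i')).1)
        (fun i' => (ih _ _).mp (Prod.ext_iff.mp (hσ i')).2)
    · intro h
      have h1 : lwl G k s i t = lwl G k s i u := (ih t u).mpr (unroll_trunc G k s i t u h)
      rw [unroll_succ G k s i t, unroll_succ G k s i u] at h
      obtain ⟨hatp, σ, hlab, hiso⟩ := iso_node_map (e₁ := Prod.fst) (e₂ := Prod.fst)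
        (f₁ := fun p : Fin k × V => unroll G k s i (Function.update t p.1 p.2))
        (f₂ := fun p : Fin k × V => unroll G k s i (Function.update u p.1 p.2)) h
      rw [lwl_succ, lwl_succ]
      refine Prod.ext h1 ?_
      funext j
      refine (pair_map_eq_iff
        (fun p : Fin k × V => G.Adj (t p.1) p.2 ∧ IsKS G k s (Function.update t p.1 p.2))
        (fun p : Fin k × V => G.Adj (u p.1) p.2 ∧ IsKS G k s (Function.update u p.1 p.2))
        (fun p => lwl G k s i (Function.update t p.1 p.2))
        (fun p => lwl G k s i (Function.update u p.1 p.2))).mp ?_ j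
      rw [coe_val, coe_val, Multiset.map_coe, Multiset.map_coe]
      exact (map_coe_eq_iff _ _ _ _).mpr
        ⟨σ, fun i' => Prod.ext (hlab i') ((ih _ _).mpr (hiso i'))⟩

end
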